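/- For a prime p and a positive integer n with base-p expansion n = n_0 + n_1 p + ... + n_l p^l (each 0 ≤ n_i < p), the multinomial coefficient c_n = n! / (n_0! (n_1 p)! (n_2 p^2)! ... (n_l p^l)!) is congruent to 1 modulo p. -/

import Mathlib

/-- `multinomC p n` is the multinomial coefficient
`c_n = n! / (n_0! * (n_1 p)! * ⋯ * (n_l p^l)!)`, where `n = n_0 + n_1 p + ⋯ + n_l p^l`
is the base-`p` expansion of `n`. -/
def multinomC (p n : ℕ) : ℕ :=
  n.factorial / ((Nat.digits p n).zipIdx.map fun x => (x.1 * p ^ x.2).factorial).prod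

lemma lucas_one (p : ℕ) [Fact p.Prime] (m : ℕ) : Nat.choose m (m % p) ≡ 1 [MOD p] := by
  have hp : 0 < p := (Fact.out : p.Prime).pos
  calc Nat.choose m (m % p)
      ≡ Nat.choose (m % p) (m % p % p) * Nat.choose (m / p) (m % p / p) [MOD p] :=
        Choose.choose_modEq_choose_mod_mul_choose_div_nat
    _ = 1 := by
        rw [Nat.mod_mod_of_dvd _ dvd_rfl, Nat.div_eq_of_lt (Nat.mod_lt _ hp)]
        simp

lemma lucas_pow (p : ℕ) [Fact p.Prime] (j m : ℕ) :
    Nat.choose (m * p ^ j) (m % p * p ^ j) ≡ 1 [MOD p] := by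
  induction j with
  | zero => simpa using lucas_one p m
  | succ j ih =>
    have hp : 0 < p := (Fact.out : p.Prime).pos
    have h1 : m * p ^ (j + 1) = p * (m * p ^ j) := by ring
    have h2 : m % p * p ^ (j + 1) = p * (m % p * p ^ j) := by ring
    calc Nat.choose (m * p ^ (j + 1)) (m % p * p ^ (j + 1))
        ≡ Nat.choose (m * p ^ (j + 1) % p) (m % p * p ^ (j + 1) % p) *
            Nat.choose (m * p ^ (j + 1) / p) (m % p * p ^ (j + 1) / p) [MOD p] :=
          Choose.choose_modEq_choose_mod_mul_choose_div_nat
      _ = Nat.choose (m * p ^ j) (m % p * p ^ j) := by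
          rw [h1, h2, Nat.mul_mod_right, Nat.mul_mod_right,
            Nat.mul_div_cancel_left _ hp, Nat.mul_div_cancel_left _ hp]
          simp
      _ ≡ 1 [MOD p] := ih

lemma key (p : ℕ) [Fact p.Prime] : ∀ m j : ℕ, ∃ c : ℕ, c ≡ 1 [MOD p] ∧
    (m * p ^ j).factorial =
      c * (((Nat.digits p m).zipIdx j).map fun x => (x.1 * p ^ x.2).factorial).prod := by
  have hp : 1 < p := (Fact.out : p.Prime).one_lt
  intro m
  induction m using Nat.strong_induction_on with
  | _ m ih =>
    intro j
    rcases Nat.eq_zero_or_pos m with hm | hm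
    · exact ⟨1, Nat.ModEq.refl 1, by simp [hm]⟩
    · obtain ⟨c, hc1, hc2⟩ := ih (m / p) (Nat.div_lt_self hm hp) (j + 1)
      refine ⟨Nat.choose (m * p ^ j) (m % p * p ^ j) * c,
        (lucas_pow p j m).mul hc1 |>.trans (by simpa using Nat.ModEq.refl 1), ?_⟩
      rw [Nat.digits_def' hp hm]
      rw [List.zipIdx_cons, List.map_cons, List.prod_cons]
      have hsplit : m * p ^ j = m % p * p ^ j + m / p * p ^ (j + 1) := by
        conv_lhs => rw [← Nat.mod_add_div m p]
        ring
      have hle : m % p * p ^ j ≤ m * p ^ j :=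
        Nat.mul_le_mul_right _ (Nat.mod_le m p)
      have hfac := Nat.choose_mul_factorial_mul_factorial hle
      have hsub : m * p ^ j - m % p * p ^ j = m / p * p ^ (j + 1) := by omega
      rw [hsub] at hfac
      calc (m * p ^ j).factorial
          = Nat.choose (m * p ^ j) (m % p * p ^ j) * (m % p * p ^ j).factorial *
              (m / p * p ^ (j + 1)).factorial := hfac.symm
        _ = _ := by rw [hc2]; ring

/-- For a prime `p` and a positive integer `n`, the multinomial coefficient `c_n`
is congruent to `1` modulo `p`. -/
theorem stmt_2 (p : ℕ) (hp : p.Prime) (n : ℕ) (hn : 0 < n) :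
    multinomC p n ≡ 1 [MOD p] := by
  haveI : Fact p.Prime := ⟨hp⟩
  obtain ⟨c, hc1, hc2⟩ := key p n 0
  simp only [pow_zero, mul_one] at hc2
  have henum : (Nat.digits p n).zipIdx = (Nat.digits p n).zipIdx 0 := rfl
  have hprodpos :
      0 < (((Nat.digits p n).zipIdx 0).map fun x => (x.1 * p ^ x.2).factorial).prod := by
    apply List.prod_pos
    intro a ha
    simp only [List.mem_map] at ha
    obtain ⟨x, _, rfl⟩ := ha
    exact Nat.factorial_pos _
  have : multinomC p n = c := by
    rw [multinomC, henum, hc2, Nat.mul_div_cancel _ hprodpos]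
  rw [this]
  exact hc1
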